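/- (Generalized Leftover Hash Lemma.) Let A and B be jointly distributed random variables on finite sets, let {h_s : 𝒳 → {0,1}^ℓ}_{s∈𝒮} be a strong universal hash family, let S be uniformly distributed on 𝒮 and independent of (A, B), and let U_ℓ be uniformly distributed on {0,1}^ℓ independent of (A, B, S). Then SD((B, S, h_S(A)); (B, S, U_ℓ)) ≤ (1/2)·√(2^{ℓ − H̃∞(A|B)}). -/

import Mathlib

open scoped BigOperators Classical

/-- Statistical distance `SD(p;q) = max_{W ⊆ T} (Pr_p[W] − Pr_q[W])`. -/
noncomputable def SD {T : Type*} [Fintype T] (p q : T → ℝ) : ℝ :=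
  Finset.univ.sup' Finset.univ_nonempty (fun W : Finset T => ∑ t ∈ W, p t - ∑ t ∈ W, q t)

/-- Average conditional min-entropy `H̃∞(A|B) = -log₂ Σ_b max_a Pr[A = a, B = b]`. -/
noncomputable def Havg {A B : Type*} [Fintype A] [Fintype B] [Nonempty A] (p : A × B → ℝ) : ℝ :=
  - Real.logb 2 (∑ b : B, Finset.univ.sup' Finset.univ_nonempty (fun a : A => p (a, b)))

/-- A strong universal hash family: for `x ≠ x'` and all `a b`,
`Pr_{s ← Uniform(𝒮)}[h_s x = a ∧ h_s x' = b] = 1/|𝒴|²`. -/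
def StrongUHF {S X Y : Type*} [Fintype S] [Fintype Y] (h : S → X → Y) : Prop :=
  ∀ x x' : X, x ≠ x' → ∀ a b : Y,
    ((Finset.univ.filter (fun s : S => h s x = a ∧ h s x' = b)).card : ℝ) / Fintype.card S
      = 1 / (Fintype.card Y : ℝ) ^ 2

set_option linter.unusedSectionVars false
set_option linter.unusedVariables false
set_option maxHeartbeats 2000000

section helperLemmas

lemma SD_le_half_l1 {T : Type*} [Fintype T] (p q : T → ℝ)
    (hpq : ∑ t : T, p t = ∑ t : T, q t) :
    SD p q ≤ (1/2) * ∑ t : T, |p t - q t| := by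
  apply Finset.sup'_le
  intro W _
  calc ∑ t ∈ W, p t - ∑ t ∈ W, q t = ∑ t ∈ W, (p t - q t) := by
        rw [Finset.sum_sub_distrib]
    _ ≤ ∑ t ∈ W, (|p t - q t| + (p t - q t)) / 2 := by
        refine Finset.sum_le_sum fun t _ => ?_
        have := le_abs_self (p t - q t)
        linarith
    _ ≤ ∑ t : T, (|p t - q t| + (p t - q t)) / 2 := by
        refine Finset.sum_le_sum_of_subset_of_nonneg (Finset.subset_univ W) fun t _ _ => ?_
        have := neg_abs_le (p t - q t)
        linarith
    _ = (1/2) * ∑ t : T, |p t - q t| := by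
        rw [← Finset.sum_div, Finset.sum_add_distrib, Finset.sum_sub_distrib, hpq, sub_self,
          add_zero]
        ring



lemma filter_inst_irrel {α : Type*} (p : α → Prop) (d1 d2 : DecidablePred p) (s : Finset α) :
    @Finset.filter α p d1 s = @Finset.filter α p d2 s := by
  have : d1 = d2 := Subsingleton.elim d1 d2
  rw [this]

variable {X S : Type*} [Fintype X] [Fintype S] [Nonempty S] {ℓ : ℕ}

lemma cardY (ℓ : ℕ) : (Fintype.card (Fin ℓ → Bool) : ℝ) = 2 ^ ℓ := by
  simp [Fintype.card_fun]

omit [Nonempty S] in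
lemma sumF (h : S → X → (Fin ℓ → Bool)) (g : X → ℝ) :
    ∑ w : S × (Fin ℓ → Bool),
      (∑ a ∈ Finset.univ.filter (fun a : X => h w.1 a = w.2), g a)
      = (Fintype.card S : ℝ) * ∑ a : X, g a := by
  rw [Fintype.sum_prod_type]
  have e : ∀ s : S,
      (∑ y : Fin ℓ → Bool, ∑ a ∈ Finset.univ.filter (fun a : X => h s a = y), g a)
        = ∑ a : X, g a := fun s => Finset.sum_fiberwise Finset.univ (h s) g
  rw [Finset.sum_congr rfl fun s _ => e s, Finset.sum_const, Finset.card_univ, nsmul_eq_mul]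

lemma Ncard (h : S → X → (Fin ℓ → Bool)) (hUHF : StrongUHF h) {a a' : X} (hne : a ≠ a') :
    ((Finset.univ.filter (fun s : S => h s a = h s a')).card : ℝ)
      = (Fintype.card S : ℝ) / 2 ^ ℓ := by
  have hcS : (0:ℝ) < (Fintype.card S : ℝ) := by
    exact_mod_cast Fintype.card_pos
  have hsplit : (Finset.univ.filter (fun s : S => h s a = h s a')).card
      = ∑ y : Fin ℓ → Bool,
          (Finset.univ.filter (fun s : S => h s a = y ∧ h s a' = y)).card := by
    simp_rw [Finset.card_filter]
    rw [Finset.sum_comm]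
    refine Finset.sum_congr rfl fun s _ => ?_
    by_cases hEq : h s a = h s a'
    · rw [if_pos hEq, Finset.sum_eq_single (h s a)]
      · rw [if_pos ⟨rfl, hEq.symm⟩]
      · intro y _ hy
        rw [if_neg]
        rintro ⟨h1, -⟩
        exact hy h1.symm
      · intro habs
        exact absurd (Finset.mem_univ _) habs
    · rw [if_neg hEq, Finset.sum_eq_zero]
      intro y _
      rw [if_neg]
      rintro ⟨h1, h2⟩
      exact hEq (h1.trans h2.symm)
  have hc : ∀ y : Fin ℓ → Bool,
      ((Finset.univ.filter (fun s : S => h s a = y ∧ h s a' = y)).card : ℝ)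
        = (Fintype.card S : ℝ) / ((2:ℝ) ^ ℓ) ^ 2 := by
    intro y
    have huh := hUHF a a' hne y y
    rw [div_eq_iff hcS.ne'] at huh
    rw [cardY] at huh
    rw [show (Fintype.card S : ℝ) / ((2:ℝ) ^ ℓ) ^ 2
        = 1 / ((2:ℝ)^ℓ)^2 * (Fintype.card S : ℝ) by ring]
    rw [← huh]
    exact_mod_cast congrArg Finset.card (filter_inst_irrel _ _ _ _)
  have h2l : ((2:ℝ) ^ ℓ) ≠ 0 := by positivity
  calc ((Finset.univ.filter (fun s : S => h s a = h s a')).card : ℝ)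
      = ∑ y : Fin ℓ → Bool,
          ((Finset.univ.filter (fun s : S => h s a = y ∧ h s a' = y)).card : ℝ) := by
        exact_mod_cast hsplit
    _ = ∑ _y : Fin ℓ → Bool, (Fintype.card S : ℝ) / ((2:ℝ) ^ ℓ) ^ 2 :=
        Finset.sum_congr rfl fun y _ => hc y
    _ = (Fintype.card S : ℝ) / 2 ^ ℓ := by
        rw [Finset.sum_const, Finset.card_univ, nsmul_eq_mul, cardY]
        field_simp

lemma sumFsq (h : S → X → (Fin ℓ → Bool)) (hUHF : StrongUHF h) (g : X → ℝ) :
    ∑ w : S × (Fin ℓ → Bool),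
      (∑ a ∈ Finset.univ.filter (fun a : X => h w.1 a = w.2), g a) ^ 2
      = (Fintype.card S : ℝ) * (∑ a : X, g a ^ 2)
        + ((Fintype.card S : ℝ) / 2 ^ ℓ) * ((∑ a : X, g a) ^ 2 - ∑ a : X, g a ^ 2) := by
  have step1 : ∑ w : S × (Fin ℓ → Bool),
      (∑ a ∈ Finset.univ.filter (fun a : X => h w.1 a = w.2), g a) ^ 2
      = ∑ a : X, ∑ a' : X, (g a * g a')
          * ((Finset.univ.filter (fun s : S => h s a = h s a')).card : ℝ) := by
    have e : ∀ w : S × (Fin ℓ → Bool),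
        (∑ a ∈ Finset.univ.filter (fun a : X => h w.1 a = w.2), g a) ^ 2
          = ∑ c : X × X,
              (if h w.1 c.1 = w.2 ∧ h w.1 c.2 = w.2 then g c.1 * g c.2 else 0) := by
      intro w
      rw [Finset.sum_filter, sq, Finset.sum_mul_sum]
      conv_rhs => rw [Fintype.sum_prod_type]
      exact Finset.sum_congr rfl fun a _ => Finset.sum_congr rfl fun a' _ =>
        ite_zero_mul_ite_zero ..
    rw [Finset.sum_congr rfl fun w _ => e w, Finset.sum_comm, Fintype.sum_prod_type]
    refine Finset.sum_congr rfl fun a _ => Finset.sum_congr rfl fun a' _ => ?_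
    rw [Fintype.sum_prod_type]
    have inner : ∀ s : S,
        (∑ y : Fin ℓ → Bool, if h s a = y ∧ h s a' = y then g a * g a' else 0)
          = if h s a = h s a' then g a * g a' else 0 := by
      intro s
      by_cases hEq : h s a = h s a'
      · rw [if_pos hEq, Finset.sum_eq_single (h s a)]
        · rw [if_pos ⟨rfl, hEq.symm⟩]
        · intro y _ hy
          rw [if_neg]
          rintro ⟨h1, -⟩
          exact hy h1.symm
        · intro habs
          exact absurd (Finset.mem_univ _) habs
      · rw [if_neg hEq, Finset.sum_eq_zero]
        intro y _
        rw [if_neg]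
        rintro ⟨h1, h2⟩
        exact hEq (h1.trans h2.symm)
    rw [Finset.sum_congr rfl fun s _ => inner s, ← Finset.sum_filter, Finset.sum_const,
      nsmul_eq_mul]
    ring
  rw [step1]
  have step2 : ∀ a : X,
      (∑ a' : X, (g a * g a')
          * ((Finset.univ.filter (fun s : S => h s a = h s a')).card : ℝ))
        = g a * g a * (Fintype.card S : ℝ)
          + ((Fintype.card S : ℝ) / 2 ^ ℓ) * (g a * ((∑ x : X, g x) - g a)) := by
    intro a
    rw [← Finset.add_sum_erase Finset.univ _ (Finset.mem_univ a)]
    have hdiag : (Finset.univ.filter (fun s : S => h s a = h s a)) = Finset.univ := by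
      apply Finset.filter_true_of_mem
      intro s _
      rfl
    rw [hdiag, Finset.card_univ]
    have hoff : ∀ a' ∈ Finset.univ.erase a,
        (g a * g a') * ((Finset.univ.filter (fun s : S => h s a = h s a')).card : ℝ)
          = ((Fintype.card S : ℝ) / 2 ^ ℓ) * g a' * g a := by
      intro a' ha'
      rw [Ncard h hUHF (Finset.ne_of_mem_erase ha').symm]
      ring
    rw [Finset.sum_congr rfl hoff]
    have : ∑ a' ∈ Finset.univ.erase a, ((Fintype.card S : ℝ) / 2 ^ ℓ) * g a' * g a
        = ((Fintype.card S : ℝ) / 2 ^ ℓ) * ((∑ x : X, g x) - g a) * g a := by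
      rw [← Finset.sum_mul, ← Finset.mul_sum, Finset.sum_erase_eq_sub (Finset.mem_univ a)]
    rw [this]
    ring
  rw [Finset.sum_congr rfl fun a _ => step2 a, Finset.sum_add_distrib]
  have e1 : ∑ a : X, g a * g a * (Fintype.card S : ℝ)
      = (Fintype.card S : ℝ) * ∑ a : X, g a ^ 2 := by
    have e : ∀ a : X, g a * g a * (Fintype.card S : ℝ) = (Fintype.card S : ℝ) * g a ^ 2 :=
      fun a => by ring
    rw [Finset.sum_congr rfl fun a _ => e a, ← Finset.mul_sum]
  have e2 : ∑ a : X, ((Fintype.card S : ℝ) / 2 ^ ℓ) * (g a * ((∑ x : X, g x) - g a))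
      = ((Fintype.card S : ℝ) / 2 ^ ℓ) * ((∑ a : X, g a) ^ 2 - ∑ a : X, g a ^ 2) := by
    rw [← Finset.mul_sum]
    congr 1
    have e : ∀ a : X, g a * ((∑ x : X, g x) - g a) = g a * (∑ x : X, g x) - g a ^ 2 :=
      fun a => by ring
    rw [Finset.sum_congr rfl fun a _ => e a, Finset.sum_sub_distrib, ← Finset.sum_mul, ← sq]
  rw [e1, e2]

lemma collision (h : S → X → (Fin ℓ → Bool)) (hUHF : StrongUHF h)
    (g : X → ℝ) (hg : ∀ a, 0 ≤ g a) :
    ∑ w : S × (Fin ℓ → Bool),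
      ((∑ a ∈ Finset.univ.filter (fun a : X => h w.1 a = w.2), g a) / (Fintype.card S : ℝ)
        - (∑ a : X, g a) / ((Fintype.card S : ℝ) * 2 ^ ℓ)) ^ 2
      ≤ (∑ a : X, g a ^ 2) / (Fintype.card S : ℝ) := by
  have hcS : (0:ℝ) < (Fintype.card S : ℝ) := by exact_mod_cast Fintype.card_pos
  have h2l : (0:ℝ) < (2:ℝ) ^ ℓ := by positivity
  set cS := (Fintype.card S : ℝ)
  set t := ∑ a : X, g a with ht
  set q := ∑ a : X, g a ^ 2 with hq
  have hq0 : 0 ≤ q := Finset.sum_nonneg fun a _ => sq_nonneg _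
  have e : ∀ w : S × (Fin ℓ → Bool),
      ((∑ a ∈ Finset.univ.filter (fun a : X => h w.1 a = w.2), g a) / cS
        - t / (cS * 2 ^ ℓ)) ^ 2
      = (∑ a ∈ Finset.univ.filter (fun a : X => h w.1 a = w.2), g a) ^ 2 * (1 / cS ^ 2)
        + (∑ a ∈ Finset.univ.filter (fun a : X => h w.1 a = w.2), g a)
            * (-(2 * t) / (cS ^ 2 * 2 ^ ℓ))
        + t ^ 2 / (cS * 2 ^ ℓ) ^ 2 := by
    intro w
    field_simp
    ring
  rw [Finset.sum_congr rfl fun w _ => e w, Finset.sum_add_distrib, Finset.sum_add_distrib,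
    ← Finset.sum_mul, ← Finset.sum_mul, Finset.sum_const, Finset.card_univ,
    Fintype.card_prod, nsmul_eq_mul, sumF h g, sumFsq h hUHF g, ← ht, ← hq]
  have hcards : ((Fintype.card S * Fintype.card (Fin ℓ → Bool) : ℕ) : ℝ) = cS * 2 ^ ℓ := by
    push_cast
    rw [cardY]
  rw [hcards]
  have key : (cS * q + cS / 2 ^ ℓ * (t ^ 2 - q)) * (1 / cS ^ 2)
      + cS * t * (-(2 * t) / (cS ^ 2 * 2 ^ ℓ)) + cS * 2 ^ ℓ * (t ^ 2 / (cS * 2 ^ ℓ) ^ 2)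
      = q / cS - q / (cS * 2 ^ ℓ) := by
    field_simp
    ring
  rw [key]
  have : 0 ≤ q / (cS * 2 ^ ℓ) := by positivity
  linarith


lemma l1_bound {X S : Type*} [Fintype X] [Fintype S] [Nonempty S] [Nonempty X] {ℓ : ℕ}
    (h : S → X → (Fin ℓ → Bool)) (hUHF : StrongUHF h)
    (g : X → ℝ) (hg : ∀ a, 0 ≤ g a) (m : ℝ) (hm : ∀ a, g a ≤ m) :
    ∑ v : S × (Fin ℓ → Bool),
      |(∑ a ∈ Finset.univ.filter (fun a : X => h v.1 a = v.2), g a) / (Fintype.card S : ℝ)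
        - (∑ a : X, g a) / ((Fintype.card S : ℝ) * 2 ^ ℓ)|
      ≤ Real.sqrt ((2:ℝ) ^ ℓ * (m * ∑ a : X, g a)) := by
  have hcol := collision h hUHF g hg
  have hcardY := cardY ℓ
  have hcS : (0:ℝ) < (Fintype.card S : ℝ) := by exact_mod_cast Fintype.card_pos
  have h2l : (0:ℝ) < (2:ℝ) ^ ℓ := by positivity
  have hm0 : 0 ≤ m := le_trans (hg (Classical.arbitrary X)) (hm _)
  have ht0 : 0 ≤ ∑ a : X, g a := Finset.sum_nonneg fun a _ => hg a
  set d := fun v : S × (Fin ℓ → Bool) =>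
    (∑ a ∈ Finset.univ.filter (fun a : X => h v.1 a = v.2), g a) / (Fintype.card S : ℝ)
      - (∑ a : X, g a) / ((Fintype.card S : ℝ) * 2 ^ ℓ) with hd
  have hgsq : ∑ a : X, g a ^ 2 ≤ m * ∑ a : X, g a := by
    rw [Finset.mul_sum]
    refine Finset.sum_le_sum fun a _ => ?_
    rw [sq]
    exact mul_le_mul_of_nonneg_right (hm a) (hg a)
  calc ∑ v : S × (Fin ℓ → Bool), |d v|
      = ∑ v : S × (Fin ℓ → Bool), |d v| * 1 := by simp
    _ ≤ Real.sqrt (∑ v : S × (Fin ℓ → Bool), |d v| ^ 2)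
        * Real.sqrt (∑ _v : S × (Fin ℓ → Bool), (1:ℝ) ^ 2) :=
        Real.sum_mul_le_sqrt_mul_sqrt _ _ _
    _ = Real.sqrt (∑ v : S × (Fin ℓ → Bool), d v ^ 2)
        * Real.sqrt ((Fintype.card S : ℝ) * 2 ^ ℓ) := by
        congr 1
        · congr 1
          exact Finset.sum_congr rfl fun v _ => sq_abs _
        · congr 1
          rw [Finset.sum_const, Finset.card_univ, Fintype.card_prod, nsmul_eq_mul]
          push_cast
          rw [hcardY]
          ring
    _ ≤ Real.sqrt ((m * ∑ a : X, g a) / (Fintype.card S : ℝ))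
        * Real.sqrt ((Fintype.card S : ℝ) * 2 ^ ℓ) := by
        refine mul_le_mul_of_nonneg_right (Real.sqrt_le_sqrt ?_) (Real.sqrt_nonneg _)
        exact le_trans hcol ((div_le_div_iff_of_pos_right hcS).mpr hgsq)
    _ = Real.sqrt ((2:ℝ) ^ ℓ * (m * ∑ a : X, g a)) := by
        rw [← Real.sqrt_mul (by positivity)]
        congr 1
        field_simp

end helperLemmas

/-- Generalized Leftover Hash Lemma: for a strong universal hash family
`{h_s : 𝒳 → {0,1}^ℓ}` with uniform independent seed `S`,
`SD((B, S, h_S(A)); (B, S, U_ℓ)) ≤ (1/2)·√(2^{ℓ − H̃∞(A|B)})`. -/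
theorem generalized_leftover_hash_lemma
    {X B S : Type*} [Fintype X] [Fintype B] [Fintype S] [Nonempty X] [Nonempty S]
    (ℓ : ℕ) (h : S → X → (Fin ℓ → Bool)) (hUHF : StrongUHF h)
    (p : X × B → ℝ) (hp : ∀ x, 0 ≤ p x) (hsum : ∑ x : X × B, p x = 1) :
    SD
      -- distribution of (B, S, h_S(A))
      (fun w : B × S × (Fin ℓ → Bool) =>
        (∑ a ∈ Finset.univ.filter (fun a : X => h w.2.1 a = w.2.2), p (a, w.1))
          / (Fintype.card S : ℝ))
      -- distribution of (B, S, U_ℓ)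
      (fun w : B × S × (Fin ℓ → Bool) =>
        (∑ a : X, p (a, w.1)) / ((Fintype.card S : ℝ) * 2 ^ ℓ))
      ≤ (1 / 2) * Real.sqrt ((2 : ℝ) ^ ((ℓ : ℝ) - Havg p)) := by
  have hcS : (0:ℝ) < (Fintype.card S : ℝ) := by exact_mod_cast Fintype.card_pos
  have h2l : (0:ℝ) < (2:ℝ) ^ ℓ := by positivity
  set m := fun b : B => Finset.univ.sup' Finset.univ_nonempty (fun a : X => p (a, b)) with hmdef
  set pb := fun b : B => ∑ a : X, p (a, b) with hpbdef
  set K := ∑ b : B, m b with hK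
  have hmub : ∀ b (a : X), p (a, b) ≤ m b := fun b a =>
    Finset.le_sup' (fun a : X => p (a, b)) (Finset.mem_univ a)
  have hm0 : ∀ b, 0 ≤ m b := fun b =>
    le_trans (hp (Classical.arbitrary X, b)) (hmub b _)
  have hpb0 : ∀ b, 0 ≤ pb b := fun b => Finset.sum_nonneg fun a _ => hp _
  have hpbsum : ∑ b : B, pb b = 1 := by
    rw [hpbdef, ← hsum]
    exact (Fintype.sum_prod_type_right (f := p)).symm
  have hKpos : 0 < K := by
    obtain ⟨x0, hx0⟩ : ∃ x : X × B, 0 < p x := by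
      by_contra hno
      push_neg at hno
      have : ∑ x : X × B, p x ≤ 0 := Finset.sum_nonpos fun x _ => hno x
      linarith
    refine Finset.sum_pos' (fun b _ => hm0 b) ⟨x0.2, Finset.mem_univ _, ?_⟩
    exact lt_of_lt_of_le hx0 (by simpa using hmub x0.2 x0.1)
  have hrpow : (2 : ℝ) ^ ((ℓ : ℝ) - Havg p) = 2 ^ ℓ * K := by
    have hHavg : Havg p = - Real.logb 2 K := rfl
    rw [hHavg, sub_neg_eq_add, Real.rpow_add two_pos, Real.rpow_natCast,
      Real.rpow_logb two_pos (by norm_num) hKpos]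
  refine le_trans (SD_le_half_l1 _ _ ?_) ?_
  · -- equal total masses
    rw [Fintype.sum_prod_type, Fintype.sum_prod_type]
    refine Finset.sum_congr rfl fun b _ => ?_
    have e1 : ∑ v : S × (Fin ℓ → Bool),
        (∑ a ∈ Finset.univ.filter (fun a : X => h v.1 a = v.2), p (a, b))
          / (Fintype.card S : ℝ) = pb b := by
      rw [← Finset.sum_div, sumF h (fun a => p (a, b))]
      field_simp
      rfl
    have e2 : ∑ v : S × (Fin ℓ → Bool),
        (∑ a : X, p (a, b)) / ((Fintype.card S : ℝ) * 2 ^ ℓ) = pb b := by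
      rw [Finset.sum_const, Finset.card_univ, Fintype.card_prod, nsmul_eq_mul]
      push_cast
      rw [cardY]
      field_simp
      try ring
    exact e1.trans e2.symm
  · -- the main bound
    have hper : ∀ b : B,
        ∑ v : S × (Fin ℓ → Bool),
          |(∑ a ∈ Finset.univ.filter (fun a : X => h v.1 a = v.2), p (a, b))
              / (Fintype.card S : ℝ)
            - (∑ a : X, p (a, b)) / ((Fintype.card S : ℝ) * 2 ^ ℓ)|
          ≤ Real.sqrt ((2:ℝ) ^ ℓ * (m b * pb b)) := fun b =>
      l1_bound h hUHF (fun a => p (a, b)) (fun a => hp _) (m b) (hmub b)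
    have hsqrtsum : ∑ b : B, Real.sqrt ((2:ℝ) ^ ℓ * (m b * pb b))
        ≤ Real.sqrt ((2:ℝ) ^ ℓ * K) := by
      have e : ∀ b : B, Real.sqrt ((2:ℝ) ^ ℓ * (m b * pb b))
          = Real.sqrt ((2:ℝ) ^ ℓ) * (Real.sqrt (m b) * Real.sqrt (pb b)) := fun b => by
        rw [Real.sqrt_mul h2l.le, Real.sqrt_mul (hm0 b)]
      rw [Finset.sum_congr rfl fun b _ => e b, ← Finset.mul_sum]
      have hCS := Real.sum_sqrt_mul_sqrt_le (Finset.univ : Finset B)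
        (f := m) (g := pb) hm0 hpb0
      calc Real.sqrt ((2:ℝ) ^ ℓ) * ∑ b : B, Real.sqrt (m b) * Real.sqrt (pb b)
          ≤ Real.sqrt ((2:ℝ) ^ ℓ) * (Real.sqrt (∑ b : B, m b) * Real.sqrt (∑ b : B, pb b)) :=
            mul_le_mul_of_nonneg_left hCS (Real.sqrt_nonneg _)
        _ = Real.sqrt ((2:ℝ) ^ ℓ * K) := by
            rw [hpbsum, Real.sqrt_one, mul_one, ← Real.sqrt_mul h2l.le, hK]
    calc (1/2) * ∑ w : B × S × (Fin ℓ → Bool),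
          |(∑ a ∈ Finset.univ.filter (fun a : X => h w.2.1 a = w.2.2), p (a, w.1))
              / (Fintype.card S : ℝ)
            - (∑ a : X, p (a, w.1)) / ((Fintype.card S : ℝ) * 2 ^ ℓ)|
        = (1/2) * ∑ b : B, ∑ v : S × (Fin ℓ → Bool),
          |(∑ a ∈ Finset.univ.filter (fun a : X => h v.1 a = v.2), p (a, b))
              / (Fintype.card S : ℝ)
            - (∑ a : X, p (a, b)) / ((Fintype.card S : ℝ) * 2 ^ ℓ)| := by
          rw [Fintype.sum_prod_type]
      _ ≤ (1/2) * ∑ b : B, Real.sqrt ((2:ℝ) ^ ℓ * (m b * pb b)) := by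
          refine mul_le_mul_of_nonneg_left (Finset.sum_le_sum fun b _ => hper b) (by norm_num)
      _ ≤ (1/2) * Real.sqrt ((2:ℝ) ^ ℓ * K) :=
          mul_le_mul_of_nonneg_left hsqrtsum (by norm_num)
      _ = (1 / 2) * Real.sqrt ((2 : ℝ) ^ ((ℓ : ℝ) - Havg p)) := by rw [hrpow]
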